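/- Let $k$ be a positive integer, let $n \ge k+3$, and let $M_k$ be a minimum distance-$k$ resolving set of the path $P_n$ with vertices $u_0, u_1, \ldots, u_{n-1}$. Then: (a) every gap of $M_k$ contains at most $2k+1$ vertices, the initial gap of $M_k$ contains at most $k+1$ vertices, and the terminal gap of $M_k$ contains at most $k+1$ vertices; moreover, it is not possible both that some gap of $M_k$ contains $2k+1$ vertices and that the union gap of $M_k$ contains $2k+1$ vertices, and at most one gap of $M_k$ contains $2k+1$ vertices; (b) if a gap of $M_k$ contains at least $k+1$ vertices, then each of its neighboring gaps contains at most $k$ vertices; and if the initial gap or the terminal gap of $M_k$ is nonempty, then its neighboring gap contains at most $k$ vertices. -/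

import Mathlib

open SimpleGraph

/-- The distance-`k` truncated distance `dₖ(x,y) = min{d(x,y), k+1}`, valued in `ℕ∞`
(so unreachable pairs have distance `⊤`, which is truncated to `k+1`). -/
noncomputable def distK {V : Type*} (G : SimpleGraph V) (k : ℕ) (x y : V) : ℕ∞ :=
  min (G.edist x y) (k + 1)

/-- `S` is a distance-`k` resolving set of `G`. -/
def IsDistKResolving {V : Type*} (G : SimpleGraph V) (k : ℕ) (S : Set V) : Prop :=
  ∀ x y : V, x ≠ y → ∃ z ∈ S, distK G k x z ≠ distK G k y z

/-- The distance-`k` dimension of a finite graph `G`: the minimum cardinality of a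
distance-`k` resolving set of `G`. -/
noncomputable def dimK {V : Type*} [Fintype V] (G : SimpleGraph V) (k : ℕ) : ℕ :=
  sInf { m | ∃ S : Finset V, IsDistKResolving G k ↑S ∧ S.card = m }

/-- `IsPathGap M i l` : on the path `u₀, …, u_{n-1}`, the vertices `uᵢ` and `u_{i+l+1}`
are neighboring vertices of `M` and the `l` vertices `u_{i+1}, …, u_{i+l}` strictly
between them form the corresponding gap of `M`. -/
def IsPathGap {n : ℕ} (M : Set (Fin n)) (i l : ℕ) : Prop :=
  ∃ (h1 : i < n) (h2 : i + l + 1 < n),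
    (⟨i, h1⟩ : Fin n) ∈ M ∧ (⟨i + l + 1, h2⟩ : Fin n) ∈ M ∧
      ∀ (t : ℕ) (ht : t < n), i < t → t < i + l + 1 → (⟨t, ht⟩ : Fin n) ∉ M

/-- `InitGapSize M x` : the initial gap of `M` is `{u₀, …, u_{x-1}}`, i.e. `uₓ` is the
vertex of `M` closest to `u₀`. -/
def InitGapSize {n : ℕ} (M : Set (Fin n)) (x : ℕ) : Prop :=
  ∃ (h : x < n), (⟨x, h⟩ : Fin n) ∈ M ∧
    ∀ (t : ℕ) (ht : t < n), t < x → (⟨t, ht⟩ : Fin n) ∉ M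

/-- `TermGapSize M y` : the terminal gap of `M` is `{u_{n-y}, …, u_{n-1}}`, i.e.
`u_{n-1-y}` is the vertex of `M` closest to `u_{n-1}`. -/
def TermGapSize {n : ℕ} (M : Set (Fin n)) (y : ℕ) : Prop :=
  y ≤ n - 1 ∧ ∃ (h : n - 1 - y < n), (⟨n - 1 - y, h⟩ : Fin n) ∈ M ∧
    ∀ (t : ℕ) (ht : t < n), n - 1 - y < t → (⟨t, ht⟩ : Fin n) ∉ M


lemma pg_edist_le_aux {n : ℕ} : ∀ (d : ℕ) (a b : Fin n), b.val = a.val + d →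
    (pathGraph n).edist a b ≤ d := by
  intro d
  induction d with
  | zero =>
    intro a b h
    have : a = b := Fin.ext (by omega)
    simp [this, edist_self]
  | succ m ih =>
    intro a b h
    have hb : a.val + 1 < n := by omega
    set c : Fin n := ⟨a.val + 1, hb⟩ with hc
    have hadj : (pathGraph n).Adj a c := pathGraph_adj.mpr (Or.inl rfl)
    have h1 : (pathGraph n).edist a c = 1 := edist_eq_one_iff_adj.mpr hadj
    have h2 := ih c b (by simp [hc]; omega)
    calc (pathGraph n).edist a b ≤ (pathGraph n).edist a c + (pathGraph n).edist c b :=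
          SimpleGraph.edist_triangle
      _ ≤ 1 + (m : ℕ∞) := by rw [h1]; exact add_le_add le_rfl h2
      _ = ((m + 1 : ℕ) : ℕ∞) := by push_cast; ring

lemma pg_walk_len {n : ℕ} {a b : Fin n} (p : (pathGraph n).Walk a b) :
    max a.val b.val - min a.val b.val ≤ p.length := by
  induction p with
  | nil => simp
  | @cons u v w h q ih =>
    rw [pathGraph_adj] at h
    rw [Walk.length_cons]
    omega

lemma pg_edist_le {n : ℕ} (a b : Fin n) :
    (pathGraph n).edist a b ≤ ((max a.val b.val - min a.val b.val : ℕ) : ℕ∞) := by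
  rcases le_total a.val b.val with hab | hab
  · have := pg_edist_le_aux (b.val - a.val) a b (by omega)
    rwa [show b.val - a.val = max a.val b.val - min a.val b.val by omega] at this
  · have := pg_edist_le_aux (a.val - b.val) b a (by omega)
    rw [show a.val - b.val = max a.val b.val - min a.val b.val by omega] at this
    rwa [edist_comm] at this

lemma pg_edist_eq {n : ℕ} (a b : Fin n) :
    (pathGraph n).edist a b = ((max a.val b.val - min a.val b.val : ℕ) : ℕ∞) := by
  refine le_antisymm (pg_edist_le a b) ?_
  have hne : (pathGraph n).edist a b ≠ ⊤ :=
    ne_top_of_le_ne_top (ENat.coe_ne_top _) (pg_edist_le a b)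
  obtain ⟨p, hp⟩ := exists_walk_of_edist_ne_top hne
  rw [← hp]
  exact_mod_cast pg_walk_len p

lemma distK_eq {n k : ℕ} (a b : Fin n) :
    distK (pathGraph n) k a b
      = ((min (max a.val b.val - min a.val b.val) (k + 1) : ℕ) : ℕ∞) := by
  rw [distK, pg_edist_eq, Nat.mono_cast.map_min]
  push_cast
  rfl

lemma no_resolve {n k : ℕ} {M : Finset (Fin n)}
    (hres : IsDistKResolving (pathGraph n) k ↑M) {p q : Fin n} (hne : p ≠ q)
    (h : ∀ z ∈ M, min (max p.val z.val - min p.val z.val) (k + 1)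
        = min (max q.val z.val - min q.val z.val) (k + 1)) : False := by
  obtain ⟨z, hz, hd⟩ := hres p q hne
  rw [distK_eq, distK_eq] at hd
  exact hd (congrArg _ (h z (Finset.mem_coe.mp hz)))

/-- From a gap hypothesis, each member of `M` lies outside the open interval. -/
lemma gap_out {n : ℕ} {M : Finset (Fin n)} {i l : ℕ}
    (hg : ∀ (t : ℕ) (ht : t < n), i < t → t < i + l + 1 → (⟨t, ht⟩ : Fin n) ∉ (↑M : Set (Fin n)))
    {z : Fin n} (hz : z ∈ M) : z.val ≤ i ∨ i + l + 1 ≤ z.val := by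
  by_contra hc
  push_neg at hc
  exact hg z.val z.isLt (by omega) (by omega) (by simpa using hz)

lemma init_out {n : ℕ} {M : Finset (Fin n)} {x : ℕ}
    (hg : ∀ (t : ℕ) (ht : t < n), t < x → (⟨t, ht⟩ : Fin n) ∉ (↑M : Set (Fin n)))
    {z : Fin n} (hz : z ∈ M) : x ≤ z.val := by
  by_contra hc
  exact hg z.val z.isLt (by omega) (by simpa using hz)

lemma term_out {n : ℕ} {M : Finset (Fin n)} {y : ℕ}
    (hg : ∀ (t : ℕ) (ht : t < n), n - 1 - y < t → (⟨t, ht⟩ : Fin n) ∉ (↑M : Set (Fin n)))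
    {z : Fin n} (hz : z ∈ M) : z.val ≤ n - 1 - y := by
  by_contra hc
  exact hg z.val z.isLt (by omega) (by simpa using hz)


/-- For a minimum distance-`k` resolving set `M` of `Pₙ` (`n ≥ k+3`):
(a) every gap of `M` has at most `2k+1` vertices, the initial and terminal gaps have at
most `k+1` vertices each, at most one gap has exactly `2k+1` vertices, and it is not
possible both that some gap has `2k+1` vertices and that the union gap has `2k+1`
vertices; (b) a gap with at least `k+1` vertices has all neighboring gaps of at most
`k` vertices, and a nonempty initial or terminal gap has its neighboring gap of at
most `k` vertices. -/
theorem stmt14 (k n : ℕ) (hk : 1 ≤ k) (hn : k + 3 ≤ n)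
    (M : Finset (Fin n))
    (hres : IsDistKResolving (pathGraph n) k ↑M)
    (hmin : ∀ M' : Finset (Fin n),
      IsDistKResolving (pathGraph n) k ↑M' → M.card ≤ M'.card) :
    ((∀ i l : ℕ, IsPathGap (↑M : Set (Fin n)) i l → l ≤ 2 * k + 1) ∧
     (∀ x : ℕ, InitGapSize (↑M : Set (Fin n)) x → x ≤ k + 1) ∧
     (∀ y : ℕ, TermGapSize (↑M : Set (Fin n)) y → y ≤ k + 1) ∧
     (∀ i l i' l' : ℕ, IsPathGap (↑M : Set (Fin n)) i l → IsPathGap (↑M : Set (Fin n)) i' l' →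
        l = 2 * k + 1 → l' = 2 * k + 1 → i = i') ∧
     ¬ (∃ i l : ℕ, IsPathGap (↑M : Set (Fin n)) i l ∧ l = 2 * k + 1 ∧
        ∃ x y : ℕ, InitGapSize (↑M : Set (Fin n)) x ∧ TermGapSize (↑M : Set (Fin n)) y ∧ x + y = 2 * k + 1)) ∧
    ((∀ i l : ℕ, IsPathGap (↑M : Set (Fin n)) i l → k + 1 ≤ l →
        ∀ j l' : ℕ, IsPathGap (↑M : Set (Fin n)) j l' →
          (j = i + l + 1 ∨ i = j + l' + 1) → l' ≤ k) ∧
     (∀ x : ℕ, InitGapSize (↑M : Set (Fin n)) x → 1 ≤ x →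
        ∀ l' : ℕ, IsPathGap (↑M : Set (Fin n)) x l' → l' ≤ k) ∧
     (∀ y : ℕ, TermGapSize (↑M : Set (Fin n)) y → 1 ≤ y →
        ∀ j l' : ℕ, IsPathGap (↑M : Set (Fin n)) j l' → j + l' + 1 = n - 1 - y → l' ≤ k)) := by
  refine ⟨⟨?_, ?_, ?_, ?_, ?_⟩, ?_, ?_, ?_⟩
  · -- every gap ≤ 2k+1
    intro i l ⟨h1, h2, hmi, hmj, hg⟩
    by_contra hcon
    push_neg at hcon
    refine no_resolve hres (p := ⟨i + k + 1, by omega⟩) (q := ⟨i + k + 2, by omega⟩)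
      (by simp [Fin.ext_iff]) ?_
    intro z hz
    have := gap_out hg hz
    simp only [Fin.val_mk]
    omega
  · -- initial gap ≤ k+1
    intro x ⟨h, hmem, hg⟩
    by_contra hcon
    push_neg at hcon
    refine no_resolve hres (p := ⟨0, by omega⟩) (q := ⟨1, by omega⟩)
      (by simp [Fin.ext_iff]) ?_
    intro z hz
    have := init_out hg hz
    simp only [Fin.val_mk]
    omega
  · -- terminal gap ≤ k+1
    intro y ⟨hy, h, hmem, hg⟩
    by_contra hcon
    push_neg at hcon
    refine no_resolve hres (p := ⟨n - 1, by omega⟩) (q := ⟨n - 2, by omega⟩)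
      (by simp only [ne_eq, Fin.mk.injEq]; omega) ?_
    intro z hz
    have := term_out hg hz
    simp only [Fin.val_mk]
    omega
  · -- at most one gap with 2k+1 vertices
    intro i l i' l' ⟨h1, h2, hmi, hmj, hg⟩ ⟨h1', h2', hmi', hmj', hg'⟩ hl hl'
    by_contra hcon
    refine no_resolve hres (p := ⟨i + k + 1, by omega⟩) (q := ⟨i' + k + 1, by omega⟩)
      (by simp only [ne_eq, Fin.mk.injEq]; omega) ?_
    intro z hz
    have := gap_out hg hz
    have := gap_out hg' hz
    simp only [Fin.val_mk]
    omega
  · -- not both a 2k+1 gap and union gap of size 2k+1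
    rintro ⟨i, l, ⟨h1, h2, hmi, hmj, hg⟩, hl, x, y, ⟨hx, hxm, hgx⟩, ⟨hy, hy', hym, hgy⟩, hxy⟩
    rcases le_or_gt (k + 1) x with hbig | hbig
    · refine no_resolve hres (p := ⟨0, by omega⟩) (q := ⟨i + k + 1, by omega⟩)
        (by simp only [ne_eq, Fin.mk.injEq]; omega) ?_
      intro z hz
      have := gap_out hg hz
      have := init_out hgx hz
      simp only [Fin.val_mk]
      omega
    · have hybig : k + 1 ≤ y := by omega
      have hjle : i + l + 1 ≤ n - 1 - y := term_out hgy (Finset.mem_coe.mp hmj)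
      refine no_resolve hres (p := ⟨n - 1, by omega⟩) (q := ⟨i + k + 1, by omega⟩)
        (by simp only [ne_eq, Fin.mk.injEq]; omega) ?_
      intro z hz
      have := gap_out hg hz
      have := term_out hgy hz
      simp only [Fin.val_mk]
      omega
  · -- big gap ⇒ neighboring gaps small
    intro i l ⟨h1, h2, hmi, hmj, hg⟩ hbig j l' ⟨h1', h2', hmi', hmj', hg'⟩ hnb
    by_contra hcon
    push_neg at hcon
    rcases hnb with rfl | rfl
    · refine no_resolve hres (p := ⟨i + l, by omega⟩) (q := ⟨i + l + 2, by omega⟩)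
        (by simp [Fin.ext_iff]) ?_
      intro z hz
      have := gap_out hg hz
      have := gap_out hg' hz
      simp only [Fin.val_mk]
      omega
    · refine no_resolve hres (p := ⟨j + l', by omega⟩) (q := ⟨j + l' + 2, by omega⟩)
        (by simp [Fin.ext_iff]) ?_
      intro z hz
      have := gap_out hg hz
      have := gap_out hg' hz
      simp only [Fin.val_mk]
      omega
  · -- nonempty initial gap ⇒ neighboring gap small
    intro x ⟨h, hmem, hgx⟩ hx1 l' ⟨h1', h2', hmi', hmj', hg'⟩
    by_contra hcon
    push_neg at hcon
    refine no_resolve hres (p := ⟨x - 1, by omega⟩) (q := ⟨x + 1, by omega⟩)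
      (by simp only [ne_eq, Fin.mk.injEq]; omega) ?_
    intro z hz
    have := init_out hgx hz
    have := gap_out hg' hz
    simp only [Fin.val_mk]
    omega
  · -- nonempty terminal gap ⇒ neighboring gap small
    intro y ⟨hy, hy', hym, hgy⟩ hy1 j l' ⟨h1', h2', hmi', hmj', hg'⟩ heq
    by_contra hcon
    push_neg at hcon
    refine no_resolve hres (p := ⟨j + l', by omega⟩) (q := ⟨j + l' + 2, by omega⟩)
      (by simp [Fin.ext_iff]) ?_
    intro z hz
    have := term_out hgy hz
    have := gap_out hg' hz
    simp only [Fin.val_mk]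
    omega
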